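/- arXiv:1209.5783 — 3 statements merged into one kernel-verified Lean document; each statement's English description precedes it below -/
import Mathlib

section
/- Let X and Y be topological spaces on which groups G and H act by homeomorphisms, let Φ : X → Y be a homeomorphism, and for each x ∈ X let α_x : G → H be a group isomorphism with Φ(γ·x) = α_x(γ)·Φ(x) for all x ∈ X and γ ∈ G. If x ∈ X does not belong to the total fixed point set F_X, then the family α is constant along the orbit of x: α_{γ·x} = α_x for all γ ∈ G. -/
/-- If `x` is not in the total fixed point set, then the family `α` is
constant along the orbit of `x`. -/
theorem alpha_constant_on_orbit_of_nonfixed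
    {X Y G H : Type*} [TopologicalSpace X] [TopologicalSpace Y]
    [Group G] [Group H] [MulAction G X] [MulAction H Y]
    [ContinuousConstSMul G X] [ContinuousConstSMul H Y]
    (Φ : X ≃ₜ Y) (α : X → (G ≃* H))
    (hequiv : ∀ (x : X) (γ : G), Φ (γ • x) = α x γ • Φ x)
    (x : X) (hx : x ∉ {x : X | ∃ γ : G, γ ≠ 1 ∧ γ • x = x}) :
    ∀ γ : G, α (γ • x) = α x := by
  simp only [Set.mem_setOf_eq, not_exists, not_and] at hx
  -- any h fixing Φ x is trivial
  have key : ∀ h : H, h • Φ x = Φ x → h = 1 := by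
    intro h hfix
    set g := (α x).symm h with hg
    have hΦ : Φ (g • x) = Φ x := by
      rw [hequiv x g, hg, (α x).apply_symm_apply, hfix]
    have hgx : g • x = x := Φ.injective hΦ
    have : g = 1 := by
      by_contra hne
      exact hx g hne hgx
    have : h = α x g := by rw [hg, (α x).apply_symm_apply]
    rw [this, ‹g = 1›, map_one]
  intro γ
  ext δ
  have h1 : Φ ((δ * γ) • x) = (α (γ • x) δ * α x γ) • Φ x := by
    rw [mul_smul, hequiv (γ • x) δ, hequiv x γ, mul_smul]
  have h2 : Φ ((δ * γ) • x) = α x (δ * γ) • Φ x := hequiv x (δ * γ)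
  have h3 : (α (γ • x) δ * α x γ) • Φ x = α x (δ * γ) • Φ x := by rw [← h1, h2]
  have h4 : ((α x (δ * γ))⁻¹ * (α (γ • x) δ * α x γ)) • Φ x = Φ x := by
    rw [mul_smul, h3, ← mul_smul, inv_mul_cancel, one_smul]
  have h5 := key _ h4
  have h6 : α (γ • x) δ * α x γ = α x (δ * γ) := by
    have := eq_of_inv_mul_eq_one h5
    exact this.symm
  have : α (γ • x) δ = α x (δ * γ) * (α x γ)⁻¹ := by
    rw [← h6, mul_assoc, mul_inv_cancel, mul_one]
  rw [this, map_mul, mul_assoc, mul_inv_cancel, mul_one]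
end

section
/- Let g ≥ 2 be an integer and let A be the (2g)×(2g) integer matrix given in block form by A = [[J, J − I],[J − I, J]], where J is the g×g matrix all of whose entries are 1 and I is the g×g identity matrix. Then the cokernel ℤ^{2g} / (I_{2g} − A)ℤ^{2g} of the endomorphism of ℤ^{2g} given by multiplication by I_{2g} − A is isomorphic, as an abelian group, to ℤ^g × ℤ/(g−1)ℤ. -/
open Matrix

/-- The `(2g)×(2g)` integer matrix `[[J, J-I],[J-I, J]]`, where `J` is the `g×g`
all-ones matrix and `I` the `g×g` identity matrix. -/
def boundaryMatrix (g : ℕ) : Matrix (Fin g ⊕ Fin g) (Fin g ⊕ Fin g) ℤ :=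
  Matrix.fromBlocks (Matrix.of fun _ _ => 1)
    ((Matrix.of fun _ _ => 1) - 1)
    ((Matrix.of fun _ _ => 1) - 1)
    (Matrix.of fun _ _ => 1)

private lemma bm_key (g : ℕ) (x : Fin g ⊕ Fin g → ℤ) (p : Fin g ⊕ Fin g) :
    ((1 : Matrix (Fin g ⊕ Fin g) (Fin g ⊕ Fin g) ℤ) - boundaryMatrix g).mulVec x p
      = Sum.elim (fun i => x (.inl i) + x (.inr i)) (fun i => x (.inl i) + x (.inr i)) p
          - ∑ j, (x (.inl j) + x (.inr j)) := by
  obtain i | i := p <;>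
  · simp only [Matrix.mulVec, dotProduct, Fintype.sum_sum_type, Matrix.sub_apply,
      boundaryMatrix, Matrix.fromBlocks_apply₁₁, Matrix.fromBlocks_apply₁₂,
      Matrix.fromBlocks_apply₂₁, Matrix.fromBlocks_apply₂₂, Matrix.of_apply,
      Matrix.one_apply, Sum.elim_inl, Sum.elim_inr, Sum.inl.injEq, Sum.inr.injEq,
      reduceCtorEq, if_false]
    simp only [sub_mul, one_mul, ite_mul, zero_mul, Finset.sum_sub_distrib,
      Finset.sum_ite_eq, Finset.mem_univ, if_true, Finset.sum_add_distrib,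
      Finset.sum_const_zero]
    ring


/-- The cokernel `ℤ^{2g} / (I - A)ℤ^{2g}` is isomorphic to
`ℤ^g × ℤ/(g-1)ℤ`. -/
theorem cokernel_boundary_matrix (g : ℕ) (hg : 2 ≤ g) :
    Nonempty ((((Fin g ⊕ Fin g) → ℤ) ⧸
        LinearMap.range (Matrix.toLin' ((1 : Matrix (Fin g ⊕ Fin g) (Fin g ⊕ Fin g) ℤ)
          - boundaryMatrix g)))
      ≃+ ((Fin g → ℤ) × ZMod (g - 1))) := by
  haveI : NeZero (g - 1) := ⟨by omega⟩
  have hcastg' : ((g : ℕ) : ZMod (g - 1)) = 1 := by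
    have h0 : ((g - 1 : ℕ) : ZMod (g - 1)) = 0 := ZMod.natCast_self _
    rw [show g = (g - 1) + 1 from by omega]
    push_cast [h0]; ring
  have hcastg : ((g : ℤ) : ZMod (g - 1)) = 1 := by
    have h0 : ((g - 1 : ℕ) : ZMod (g - 1)) = 0 := ZMod.natCast_self _
    have hg' : g = (g - 1) + 1 := by omega
    rw [show ((g : ℤ) : ZMod (g - 1)) = ((g : ℕ) : ZMod (g - 1)) by push_cast; ring]
    rw [hg']
    push_cast [h0]
    ring
  have hcoe : ((g - 1 : ℕ) : ℤ) = (g : ℤ) - 1 := by push_cast [Nat.cast_sub (by omega : 1 ≤ g)]; ring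
  -- the comparison map
  let pr : (Fin g ⊕ Fin g) → (((Fin g ⊕ Fin g) → ℤ) →ₗ[ℤ] ℤ) := fun p => LinearMap.proj p
  set φ₁ : ((Fin g ⊕ Fin g) → ℤ) →ₗ[ℤ] (Fin g → ℤ) :=
    LinearMap.pi (fun i => pr (Sum.inl i) - pr (Sum.inr i)) with hφ₁
  set σ : ((Fin g ⊕ Fin g) → ℤ) →ₗ[ℤ] ℤ :=
    ∑ i : Fin g, pr (Sum.inl i) with hσ
  set φ₂ : ((Fin g ⊕ Fin g) → ℤ) →ₗ[ℤ] ZMod (g - 1) :=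
    (Algebra.linearMap ℤ (ZMod (g - 1))).comp σ with hφ₂
  set φ := φ₁.prod φ₂ with hφ
  have hφ₁app : ∀ (v : (Fin g ⊕ Fin g) → ℤ) (i : Fin g),
      φ₁ v i = v (.inl i) - v (.inr i) := by
    intro v i; simp [hφ₁, pr]
  have hφ₂app : ∀ (v : (Fin g ⊕ Fin g) → ℤ),
      φ₂ v = ((∑ i : Fin g, v (.inl i) : ℤ) : ZMod (g - 1)) := by
    intro v
    simp [hφ₂, hσ, pr, LinearMap.sum_apply, algebraMap_int_eq]
  -- kernel computation
  have hker : LinearMap.ker φ = LinearMap.range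
      (Matrix.toLin' ((1 : Matrix (Fin g ⊕ Fin g) (Fin g ⊕ Fin g) ℤ) - boundaryMatrix g)) := by
    ext v
    simp only [LinearMap.mem_ker, LinearMap.mem_range]
    constructor
    · intro hv
      have h1 : ∀ i, v (.inl i) - v (.inr i) = 0 := by
        intro i
        have := congrArg (fun p => p.1 i) hv
        simpa [hφ, hφ₁app] using this
      have h2 : ((∑ i : Fin g, v (.inl i) : ℤ) : ZMod (g - 1)) = 0 := by
        have := congrArg Prod.snd hv
        simpa [hφ, hφ₂app] using this
      obtain ⟨k, hk⟩ := (ZMod.intCast_zmod_eq_zero_iff_dvd _ _).mp h2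
      rw [hcoe] at hk
      set y : Fin g ⊕ Fin g → ℤ := Sum.elim (fun i => v (.inl i) - k) (fun _ => 0) with hy
      refine ⟨y, ?_⟩
      funext p
      rw [Matrix.toLin'_apply, bm_key]
      have hsum : ∑ j : Fin g, (y (Sum.inl j) + y (Sum.inr j)) = -k := by
        simp only [hy, Sum.elim_inl, Sum.elim_inr, add_zero, Finset.sum_sub_distrib,
          Finset.sum_const, Finset.card_univ, Fintype.card_fin, nsmul_eq_mul, hk]
        ring
      rw [hsum]
      obtain i | i := p
      · simp only [hy, Sum.elim_inl, Sum.elim_inr, add_zero]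
        ring
      · simp only [hy, Sum.elim_inl, Sum.elim_inr, add_zero]
        have := h1 i
        omega
    · rintro ⟨x, rfl⟩
      have hval : ∀ p, Matrix.toLin' ((1 : Matrix (Fin g ⊕ Fin g) (Fin g ⊕ Fin g) ℤ)
          - boundaryMatrix g) x p
          = Sum.elim (fun i => x (.inl i) + x (.inr i)) (fun i => x (.inl i) + x (.inr i)) p
            - ∑ j, (x (.inl j) + x (.inr j)) := by
        intro p; rw [Matrix.toLin'_apply, bm_key]
      apply Prod.ext
      · funext i
        simp only [hφ, LinearMap.prod_apply, Function.prod, hφ₁app, hval, Sum.elim_inl, Sum.elim_inr,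
          Prod.fst_zero, Pi.zero_apply]
        ring
      · set S : ℤ := ∑ j, (x (.inl j) + x (.inr j)) with hS
        simp only [hφ, LinearMap.prod_apply, Function.prod, hφ₂app, hval, Sum.elim_inl, Prod.snd_zero]
        have : (∑ i : Fin g, (x (.inl i) + x (.inr i) - S)) = S - g * S := by
          simp only [Finset.sum_sub_distrib, Finset.sum_const, Finset.card_univ,
            Fintype.card_fin, nsmul_eq_mul, hS]
        rw [this]
        push_cast
        rw [hcastg']
        ring
  -- surjectivity
  have hsurj : Function.Surjective φ := by
    rintro ⟨w, c⟩
    obtain ⟨m, hm⟩ := ZMod.intCast_surjective c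
    have i0 : Fin g := ⟨0, by omega⟩
    set u : Fin g → ℤ := fun i => if i = i0 then m - ∑ j, w j else 0 with hu
    refine ⟨Sum.elim (fun i => w i + u i) u, ?_⟩
    apply Prod.ext
    · funext i
      simp [hφ, Pi.prod, hφ₁app]
    · simp only [hφ, LinearMap.prod_apply, Function.prod, hφ₂app, Sum.elim_inl]
      have : (∑ i : Fin g, (w i + u i)) = m := by
        simp only [Finset.sum_add_distrib, hu, Finset.sum_ite_eq', Finset.mem_univ, if_true]
        ring
      rw [this, hm]
  exact ⟨((Submodule.quotEquivOfEq _ _ hker.symm).trans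
    (LinearMap.quotKerEquivOfSurjective φ hsurj)).toAddEquiv⟩
end

section
/- Let g ≥ 2 be an integer and let A be the (2g)×(2g) integer matrix given in block form by A = [[J, J − I],[J − I, J]], where J is the g×g matrix all of whose entries are 1 and I is the g×g identity matrix. Then in the cokernel ℤ^{2g} / (I_{2g} − A)ℤ^{2g}, the class u of the all-ones vector (1, 1, …, 1) ∈ ℤ^{2g} has additive order g − 1, and the cyclic subgroup generated by u is exactly the torsion subgroup of the cokernel. -/
open Matrix

lemma B_apply (g : ℕ) (s t : Fin g ⊕ Fin g) :
    ((1 : Matrix (Fin g ⊕ Fin g) (Fin g ⊕ Fin g) ℤ) - boundaryMatrix g) s t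
      = (if Sum.elim id id s = Sum.elim id id t then 1 else 0) - 1 := by
  cases s <;> cases t <;>
    simp [boundaryMatrix, Matrix.one_apply, Matrix.sub_apply] <;> congr

lemma toLinB_apply (g : ℕ) (v : (Fin g ⊕ Fin g) → ℤ) (s : Fin g ⊕ Fin g) :
    Matrix.toLin' ((1 : Matrix (Fin g ⊕ Fin g) (Fin g ⊕ Fin g) ℤ) - boundaryMatrix g) v s
      = v (Sum.inl (Sum.elim id id s)) + v (Sum.inr (Sum.elim id id s)) - ∑ t, v t := by
  rw [Matrix.toLin'_apply]
  simp only [Matrix.mulVec, dotProduct, B_apply, sub_mul, one_mul]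
  rw [Finset.sum_sub_distrib]
  congr 1
  rw [Fintype.sum_sum_type]
  cases s <;> rename_i a <;> congr 1 <;> rw [Finset.sum_eq_single a (fun b _ hb => by split_ifs with h <;> simp_all) (by simp)] <;> split_ifs <;> simp_all

/-- The invariant map `x ↦ (x∘inl - x∘inr, Σ x∘inr mod (g-1))`. -/
def phiMap (g : ℕ) : ((Fin g ⊕ Fin g) → ℤ) →ₗ[ℤ] ((Fin g → ℤ) × ZMod (g - 1)) where
  toFun x := (fun i => x (Sum.inl i) - x (Sum.inr i),
    ((∑ i, x (Sum.inr i) : ℤ) : ZMod (g - 1)))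
  map_add' x y := by
    refine Prod.ext (funext fun i => by simp; ring) ?_
    simp [Finset.sum_add_distrib]
  map_smul' c x := by
    refine Prod.ext (funext fun i => by simp [smul_eq_mul]; ring) ?_
    show ((∑ i, (c • x) (Sum.inr i) : ℤ) : ZMod (g - 1)) = _
    simp only [Pi.smul_apply, smul_eq_mul, ← Finset.mul_sum, Int.cast_mul,
      RingHom.id_apply]
    rw [Prod.smul_snd, zsmul_eq_mul]

lemma g_cast (g : ℕ) (hg : 2 ≤ g) : ((g : ℕ) : ZMod (g - 1)) = 1 := by
  have h : g = (g - 1) + 1 := by omega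
  rw [h]
  push_cast
  simp

lemma phi_range_zero (g : ℕ) (hg : 2 ≤ g) (v : (Fin g ⊕ Fin g) → ℤ) :
    phiMap g (Matrix.toLin' ((1 : Matrix (Fin g ⊕ Fin g) (Fin g ⊕ Fin g) ℤ)
      - boundaryMatrix g) v) = 0 := by
  refine Prod.ext (funext fun i => ?_) ?_
  · show Matrix.toLin' _ v (Sum.inl i) - Matrix.toLin' _ v (Sum.inr i) = 0
    rw [toLinB_apply, toLinB_apply]
    simp
  · show ((∑ i, _ : ℤ) : ZMod (g-1)) = 0
    have : (∑ i : Fin g, Matrix.toLin' ((1 : Matrix (Fin g ⊕ Fin g) (Fin g ⊕ Fin g) ℤ)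
        - boundaryMatrix g) v (Sum.inr i) : ℤ) = (1 - (g:ℤ)) * ∑ t, v t := by
      simp only [toLinB_apply]
      rw [Finset.sum_sub_distrib, Fintype.sum_sum_type]
      simp [Finset.sum_const, sub_mul, one_mul, Finset.sum_add_distrib]
    rw [this, Int.cast_mul]
    push_cast [g_cast g hg]
    ring

lemma phi_ker_sub (g : ℕ) (hg : 2 ≤ g) (x : (Fin g ⊕ Fin g) → ℤ) (hx : phiMap g x = 0) :
    x ∈ LinearMap.range (Matrix.toLin'
      ((1 : Matrix (Fin g ⊕ Fin g) (Fin g ⊕ Fin g) ℤ) - boundaryMatrix g)) := by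
  have h1 : ∀ i, x (Sum.inl i) = x (Sum.inr i) := by
    intro i
    have := congrFun (congrArg Prod.fst hx) i
    simpa [phiMap, sub_eq_zero] using this
  have h2 : ((∑ i, x (Sum.inr i) : ℤ) : ZMod (g - 1)) = 0 := congrArg Prod.snd hx
  rw [ZMod.intCast_zmod_eq_zero_iff_dvd] at h2
  obtain ⟨k, hk⟩ := h2
  set w : (Fin g ⊕ Fin g) → ℤ := fun s => Sum.elim (fun i => x (Sum.inr i) - k) (fun _ => 0) s with hw
  refine ⟨w, ?_⟩
  funext s
  rw [toLinB_apply]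
  have hsum : (∑ t, w t) = -k := by
    rw [Fintype.sum_sum_type]
    simp [hw, Finset.sum_sub_distrib, Finset.sum_const]
    rw [hk]
    have : ((g - 1 : ℕ) : ℤ) = (g : ℤ) - 1 := by omega
    rw [this]; ring
  rw [hsum]
  cases s with
  | inl i => simp [hw, h1 i]
  | inr i => simp [hw]

/-- In the cokernel `ℤ^{2g} / (I - A)ℤ^{2g}`, the class `u` of the
all-ones vector has additive order `g - 1`, and the cyclic subgroup it generates is
exactly the torsion subgroup. -/
theorem unit_class_generates_torsion (g : ℕ) (hg : 2 ≤ g) :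
    addOrderOf ((Submodule.Quotient.mk (fun _ => (1 : ℤ)) :
        ((Fin g ⊕ Fin g) → ℤ) ⧸
          LinearMap.range (Matrix.toLin'
            ((1 : Matrix (Fin g ⊕ Fin g) (Fin g ⊕ Fin g) ℤ) - boundaryMatrix g))))
      = g - 1 ∧
    ∀ v : ((Fin g ⊕ Fin g) → ℤ) ⧸
        LinearMap.range (Matrix.toLin'
          ((1 : Matrix (Fin g ⊕ Fin g) (Fin g ⊕ Fin g) ℤ) - boundaryMatrix g)),
      (∃ n : ℕ, 0 < n ∧ n • v = 0) ↔
        v ∈ AddSubgroup.zmultiples (Submodule.Quotient.mk (fun _ => (1 : ℤ))) := by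
  haveI : NeZero (g - 1) := ⟨by omega⟩
  set R := LinearMap.range (Matrix.toLin'
      ((1 : Matrix (Fin g ⊕ Fin g) (Fin g ⊕ Fin g) ℤ) - boundaryMatrix g)) with hR
  set u : ((Fin g ⊕ Fin g) → ℤ) ⧸ R :=
    Submodule.Quotient.mk (fun _ => (1 : ℤ)) with hu
  -- every element of R is killed by phiMap
  have hR0 : ∀ y ∈ R, phiMap g y = 0 := by
    rintro y ⟨v, rfl⟩; exact phi_range_zero g hg v
  -- phiMap of the all-ones vector
  have hphi1 : phiMap g (fun _ => (1 : ℤ)) = (0, 1) := by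
    refine Prod.ext (funext fun i => by simp [phiMap]) ?_
    show ((∑ _i : Fin g, (1:ℤ) : ℤ) : ZMod (g-1)) = 1
    simp only [Finset.sum_const, Finset.card_univ, Fintype.card_fin, nsmul_eq_mul, mul_one]
    push_cast
    exact g_cast g hg
  -- (g-1) • u = 0
  have hkill : (g - 1) • u = 0 := by
    rw [hu, ← Submodule.Quotient.mk_smul]
    rw [Submodule.Quotient.mk_eq_zero]
    refine ⟨(fun s => Sum.elim (fun _ => -1) (fun _ => 0) s : (Fin g ⊕ Fin g) → ℤ), ?_⟩
    funext s
    rw [toLinB_apply, Fintype.sum_sum_type]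
    have : ((g - 1 : ℕ) : ℤ) = (g : ℤ) - 1 := by omega
    cases s <;> simp [Finset.sum_const, this, Pi.smul_apply, smul_eq_mul] <;> ring
  -- if n • u = 0 then (g-1) ∣ n
  have hdvd : ∀ n : ℕ, n • u = 0 → (g - 1) ∣ n := by
    intro n hn
    rw [hu, ← Submodule.Quotient.mk_smul, Submodule.Quotient.mk_eq_zero] at hn
    have h0 := hR0 _ hn
    have h2 : ((∑ i : Fin g, (n • (fun _ => (1:ℤ))) (Sum.inr i) : ℤ) : ZMod (g-1)) = 0 :=
      congrArg Prod.snd h0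
    simp only [Pi.smul_apply, smul_eq_mul, nsmul_eq_mul, mul_one, Finset.sum_const,
      Finset.card_univ, Fintype.card_fin] at h2
    push_cast at h2
    rw [g_cast g hg, one_mul] at h2
    exact (ZMod.natCast_eq_zero_iff n (g-1)).mp h2
  constructor
  · exact Nat.dvd_antisymm (addOrderOf_dvd_of_nsmul_eq_zero hkill)
      (hdvd _ (addOrderOf_nsmul_eq_zero u))
  · intro v
    constructor
    · rintro ⟨n, hn0, hnv⟩
      obtain ⟨x, rfl⟩ := Submodule.Quotient.mk_surjective R v
      rw [← Submodule.Quotient.mk_smul, Submodule.Quotient.mk_eq_zero] at hnv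
      have h0 := hR0 _ hnv
      rw [map_nsmul] at h0
      have hfst : (phiMap g x).1 = 0 := by
        funext i
        have hi := congrFun (congrArg Prod.fst h0) i
        rw [Prod.smul_fst, Pi.smul_apply] at hi
        simp only [Prod.fst_zero, Pi.zero_apply, nsmul_eq_mul] at hi
        have := mul_eq_zero.mp hi
        rcases this with h | h
        · exfalso
          have : n = 0 := by exact_mod_cast h
          omega
        · exact h
      set c := (phiMap g x).2 with hc
      set m := c.val with hm
      rw [AddSubgroup.mem_zmultiples_iff]
      refine ⟨(m : ℤ), ?_⟩
      have hmem : x - (m : ℤ) • (fun _ => (1:ℤ)) ∈ R := by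
        apply phi_ker_sub g hg
        rw [map_sub, map_zsmul, hphi1]
        refine Prod.ext ?_ ?_
        · simp [hfst]
        · show c - (m : ℤ) • (1 : ZMod (g-1)) = 0
          rw [zsmul_eq_mul, mul_one, hm]
          push_cast
          rw [ZMod.natCast_rightInverse c]
          ring
      have := (Submodule.Quotient.mk_eq_zero R).mpr hmem
      rw [Submodule.Quotient.mk_sub, Submodule.Quotient.mk_smul, sub_eq_zero] at this
      exact this.symm
    · rw [AddSubgroup.mem_zmultiples_iff]
      rintro ⟨k, rfl⟩
      refine ⟨g - 1, by omega, ?_⟩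
      rw [smul_comm, hkill, smul_zero]
end
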